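/- Fix a finite n ≥ 2. Let V be a countably infinite set, s : V → Fin n a surjection (whose fibers are the ⊥-classes), and → a binary relation on V such that: x → y implies s(x) ≠ s(y); for all x, y with s(x) ≠ s(y) exactly one of x → y, y → x holds; and for every i ∈ Fin n and all disjoint finite sets A, B ⊆ {v ∈ V : s(v) ≠ i} there exists x with s(x) = i, x → a for all a ∈ A, and b → x for all b ∈ B. (This directed graph is the generic structure n ∗ I_∞ in which the non-adjacency relation ⊥ is an equivalence with n classes.) Then its distinguishing number is 2: there exists a coloring c : V → Bool such that the only automorphism g with c ∘ g = c is the identity, while a nontrivial automorphism exists. -/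

import Mathlib

open scoped Classical

namespace NSI

variable {n : ℕ} {V : Type*}

structure Gen (s : V → Fin n) (R : V → V → Prop) : Prop where
  cls : ∀ x y, R x y → s x ≠ s y
  tour : ∀ x y, s x ≠ s y → (R x y ↔ ¬ R y x)
  ext : ∀ i : Fin n, ∀ A B : Finset V, Disjoint A B →
      (∀ a ∈ A, s a ≠ i) → (∀ b ∈ B, s b ≠ i) →
      ∃ x, s x = i ∧ (∀ a ∈ A, R x a) ∧ (∀ b ∈ B, R b x)

variable {s : V → Fin n} {R : V → V → Prop}

lemma Gen.irrefl (G : Gen s R) (x : V) : ¬ R x x := fun h => G.cls x x h rfl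

lemma Gen.asymm (G : Gen s R) {x y : V} (h1 : R x y) (h2 : R y x) : False :=
  (G.tour x y (G.cls x y h1)).mp h1 h2

lemma Gen.total (G : Gen s R) {x y : V} (h : s x ≠ s y) : R x y ∨ R y x := by
  by_cases hx : R x y
  · exact Or.inl hx
  · exact Or.inr (by_contra fun hyx => hx ((G.tour x y h).mpr hyx))

def other (hn : 2 ≤ n) (i : Fin n) : Fin n :=
  if i = ⟨0, by omega⟩ then ⟨1, by omega⟩ else ⟨0, by omega⟩

lemma other_ne (hn : 2 ≤ n) (i : Fin n) : other hn i ≠ i := by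
  unfold other
  split
  · next h => rw [h]; simp [Fin.ext_iff]
  · next h => exact fun hh => h hh.symm

lemma L1 (G : Gen s R) (hn : 2 ≤ n) (i : Fin n) :
    ∀ (m : ℕ) (A F : Finset V), (F.filter (fun v => s v = i)).card = m →
      (∀ a ∈ A, s a ≠ i) → ∃ x, s x = i ∧ (∀ a ∈ A, R x a) ∧ x ∉ F := by
  intro m
  induction m with
  | zero =>
    intro A F hF hA
    obtain ⟨x, hx1, hx2, -⟩ := G.ext i A ∅ (by simp) hA (by simp)
    refine ⟨x, hx1, hx2, fun hxF => ?_⟩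
    have hx : x ∈ F.filter (fun v => s v = i) := Finset.mem_filter.mpr ⟨hxF, hx1⟩
    rw [Finset.card_eq_zero] at hF
    simp [hF] at hx
  | succ m ih =>
    intro A F hF hA
    have hne : (F.filter (fun v => s v = i)).Nonempty := by
      rw [← Finset.card_pos, hF]; omega
    obtain ⟨f, hf⟩ := hne
    have hfF : f ∈ F := (Finset.mem_filter.mp hf).1
    have hfi : s f = i := (Finset.mem_filter.mp hf).2
    obtain ⟨x₁, hx₁i, hx₁f, -⟩ := G.ext (other hn i) {f} ∅ (by simp)
      (by intro a ha; rw [Finset.mem_singleton] at ha; subst ha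
          rw [hfi]; exact (other_ne hn i).symm)
      (by simp)
    obtain ⟨x, hxi, hxA, hxF⟩ := ih (insert x₁ A) (F.erase f)
      (by rw [Finset.filter_erase, Finset.card_erase_of_mem hf, hF]; omega)
      -- card

      (by intro a ha
          rcases Finset.mem_insert.mp ha with rfl | ha'
          · rw [hx₁i]; exact other_ne hn i
          · exact hA a ha')
    have hxf : x ≠ f := by
      intro he
      exact G.asymm (hxA x₁ (Finset.mem_insert_self _ _))
        (by rw [he]; exact hx₁f f (Finset.mem_singleton_self f))
    refine ⟨x, hxi, fun a ha => hxA a (Finset.mem_insert_of_mem ha), fun hxF' => ?_⟩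
    exact hxF (Finset.mem_erase.mpr ⟨hxf, hxF'⟩)

lemma L2 (G : Gen s R) (hn : 2 ≤ n) (i : Fin n) :
    ∀ (m : ℕ) (A B F : Finset V), (F.filter (fun v => s v = i)).card = m →
      Disjoint A B → (∀ a ∈ A, s a ≠ i) → (∀ b ∈ B, s b ≠ i) →
      ∃ x, s x = i ∧ (∀ a ∈ A, R x a) ∧ (∀ b ∈ B, R b x) ∧ x ∉ F := by
  intro m
  induction m with
  | zero =>
    intro A B F hF hd hA hB
    obtain ⟨x, hx1, hx2, hx3⟩ := G.ext i A B hd hA hB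
    refine ⟨x, hx1, hx2, hx3, fun hxF => ?_⟩
    have hx : x ∈ F.filter (fun v => s v = i) := Finset.mem_filter.mpr ⟨hxF, hx1⟩
    rw [Finset.card_eq_zero] at hF
    simp [hF] at hx
  | succ m ih =>
    intro A B F hF hd hA hB
    have hne : (F.filter (fun v => s v = i)).Nonempty := by
      rw [← Finset.card_pos, hF]; omega
    obtain ⟨f, hf⟩ := hne
    have hfF : f ∈ F := (Finset.mem_filter.mp hf).1
    have hfi : s f = i := (Finset.mem_filter.mp hf).2
    obtain ⟨x₁, hx₁i, hx₁f, hx₁B⟩ := L1 G hn (other hn i) _ {f} B rfl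
      (by intro a ha; rw [Finset.mem_singleton] at ha; subst ha
          rw [hfi]; exact (other_ne hn i).symm)
    obtain ⟨x, hxi, hxA, hxB, hxF⟩ := ih (insert x₁ A) B (F.erase f)
      (by rw [Finset.filter_erase, Finset.card_erase_of_mem hf, hF]; omega)
      -- card

      (by rw [Finset.disjoint_left]
          intro a ha haB
          rcases Finset.mem_insert.mp ha with rfl | ha'
          · exact hx₁B haB
          · exact Finset.disjoint_left.mp hd ha' haB)
      (by intro a ha
          rcases Finset.mem_insert.mp ha with rfl | ha'
          · rw [hx₁i]; exact other_ne hn i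
          · exact hA a ha')
      hB
    have hxf : x ≠ f := by
      intro he
      exact G.asymm (hxA x₁ (Finset.mem_insert_self _ _))
        (by rw [he]; exact hx₁f f (Finset.mem_singleton_self f))
    refine ⟨x, hxi, fun a ha => hxA a (Finset.mem_insert_of_mem ha), hxB, fun hxF' => ?_⟩
    exact hxF (Finset.mem_erase.mpr ⟨hxf, hxF'⟩)

def eps (hn : 2 ≤ n) (k : ℕ) : Fin n := if Even k then ⟨0, by omega⟩ else ⟨1, by omega⟩

lemma eps_succ_ne (hn : 2 ≤ n) (k : ℕ) : eps hn k ≠ eps hn (k+1) := by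
  unfold eps
  rcases Nat.even_or_odd k with h | h
  · rw [if_pos h, if_neg (by simpa [Nat.even_add_one] using h)]
    simp [Fin.ext_iff]
  · rw [if_neg (Nat.not_even_iff_odd.mpr h), if_pos (by simpa [Nat.even_add_one] using Nat.not_even_iff_odd.mpr h)]
    simp [Fin.ext_iff]
section PartA

variable (s R) in
def Good (hn : 2 ≤ n) (e2 : ℕ → V × V) (k : ℕ) (prev : Finset V) (x : V) : Prop :=
  s x = eps hn k ∧ x ∉ prev ∧ (∀ p ∈ prev, s p ≠ eps hn k → R p x) ∧
    ((e2 (k/2)).1 ≠ (e2 (k/2)).2 → (e2 (k/2)).1 ∉ prev → (e2 (k/2)).2 ∉ prev →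
      s (e2 (k/2)).1 ≠ eps hn k →
      R x (e2 (k/2)).1 ∧ (s (e2 (k/2)).2 ≠ eps hn k → R (e2 (k/2)).2 x))

lemma stepEx (G : Gen s R) (hn : 2 ≤ n) (e2 : ℕ → V × V) (k : ℕ) (prev : Finset V) :
    ∃ x, Good s R hn e2 k prev x := by
  set i := eps hn k with hi
  set u := (e2 (k/2)).1 with hu
  set v := (e2 (k/2)).2 with hv
  by_cases hact : u ≠ v ∧ u ∉ prev ∧ v ∉ prev ∧ s u ≠ i
  · obtain ⟨huv, hup, hvp, hsu⟩ := hact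
    by_cases hsv : s v ≠ i
    · obtain ⟨x, h1, h2, h3, h4⟩ := L2 G hn i _ {u}
        (insert v (prev.filter (fun p => s p ≠ i))) prev rfl
        (by rw [Finset.disjoint_left]
            intro a ha hb
            rw [Finset.mem_singleton] at ha; subst ha
            rcases Finset.mem_insert.mp hb with h | h
            · exact huv h
            · exact hup (Finset.mem_filter.mp h).1)
        (by intro a ha; rw [Finset.mem_singleton] at ha; subst ha; exact hsu)
        (by intro b hb
            rcases Finset.mem_insert.mp hb with rfl | h
            · exact hsv
            · exact (Finset.mem_filter.mp h).2)
      refine ⟨x, h1, h4, fun p hp hsp => h3 p (Finset.mem_insert_of_mem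
        (Finset.mem_filter.mpr ⟨hp, hsp⟩)), fun _ _ _ _ => ?_⟩
      exact ⟨h2 u (Finset.mem_singleton_self u), fun _ => h3 v (Finset.mem_insert_self _ _)⟩
    · obtain ⟨x, h1, h2, h3, h4⟩ := L2 G hn i _ {u}
        (prev.filter (fun p => s p ≠ i)) prev rfl
        (by rw [Finset.disjoint_left]
            intro a ha hb
            rw [Finset.mem_singleton] at ha; subst ha
            exact hup (Finset.mem_filter.mp hb).1)
        (by intro a ha; rw [Finset.mem_singleton] at ha; subst ha; exact hsu)
        (fun b hb => (Finset.mem_filter.mp hb).2)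
      refine ⟨x, h1, h4, fun p hp hsp => h3 p (Finset.mem_filter.mpr ⟨hp, hsp⟩),
        fun _ _ _ _ => ⟨h2 u (Finset.mem_singleton_self u), fun hv' => absurd hv' hsv⟩⟩
  · obtain ⟨x, h1, h2, h3, h4⟩ := L2 G hn i _ ∅
      (prev.filter (fun p => s p ≠ i)) prev rfl
      (by simp) (by simp) (fun b hb => (Finset.mem_filter.mp hb).2)
    refine ⟨x, h1, h4, fun p hp hsp => h3 p (Finset.mem_filter.mpr ⟨hp, hsp⟩),
      fun h1' h2' h3' h4' => absurd ⟨h1', h2', h3', h4'⟩ hact⟩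

variable (s R) in
noncomputable def cF (G : Gen s R) (hn : 2 ≤ n) (e2 : ℕ → V × V) (v0 : V) : ℕ → ℕ → V
  | 0 => fun _ => v0
  | k + 1 => Function.update (cF G hn e2 v0 k) k
      (Classical.choose (stepEx G hn e2 k ((Finset.range k).image (cF G hn e2 v0 k))))

variable (s R) in
noncomputable def cs (G : Gen s R) (hn : 2 ≤ n) (e2 : ℕ → V × V) (v0 : V) : ℕ → V :=
  fun k => cF s R G hn e2 v0 (k+1) k

lemma cF_coh (G : Gen s R) (hn : 2 ≤ n) (e2 : ℕ → V × V) (v0 : V) :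
    ∀ m k, k < m → cF s R G hn e2 v0 m k = cs s R G hn e2 v0 k := by
  intro m
  induction m with
  | zero => intro k hk; omega
  | succ m ih =>
    intro k hk
    by_cases h : k = m
    · subst h; rfl
    · have hk' : k < m := by omega
      show Function.update (cF s R G hn e2 v0 m) m _ k = _
      rw [Function.update_of_ne h]
      exact ih k hk'

lemma prev_eq (G : Gen s R) (hn : 2 ≤ n) (e2 : ℕ → V × V) (v0 : V) (k : ℕ) :
    (Finset.range k).image (cF s R G hn e2 v0 k) = (Finset.range k).image (cs s R G hn e2 v0) :=
  Finset.image_congr (fun j hj => cF_coh G hn e2 v0 k j (Finset.mem_range.mp hj))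

lemma cs_spec (G : Gen s R) (hn : 2 ≤ n) (e2 : ℕ → V × V) (v0 : V) (k : ℕ) :
    Good s R hn e2 k ((Finset.range k).image (cs s R G hn e2 v0)) (cs s R G hn e2 v0 k) := by
  have he : cs s R G hn e2 v0 k
      = Classical.choose (stepEx G hn e2 k ((Finset.range k).image (cF s R G hn e2 v0 k))) := by
    show cF s R G hn e2 v0 (k+1) k = _
    simp only [cF]
    rw [Function.update_self]
  have hs := Classical.choose_spec (stepEx G hn e2 k ((Finset.range k).image (cF s R G hn e2 v0 k)))
  rw [← he, prev_eq] at hs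
  exact hs

end PartA

section Derived

variable (G : Gen s R) (hn : 2 ≤ n) (e2 : ℕ → V × V) (v0 : V)

lemma cs_class (k : ℕ) : s (cs s R G hn e2 v0 k) = eps hn k :=
  (cs_spec G hn e2 v0 k).1

lemma cs_fresh (k : ℕ) :
    cs s R G hn e2 v0 k ∉ (Finset.range k).image (cs s R G hn e2 v0) :=
  (cs_spec G hn e2 v0 k).2.1

lemma cs_inj : Function.Injective (cs s R G hn e2 v0) := by
  intro a b hab
  by_contra hne
  rcases Nat.lt_or_ge a b with h | h
  · exact cs_fresh G hn e2 v0 b (Finset.mem_image.mpr ⟨a, Finset.mem_range.mpr h, hab⟩)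
  · have h' : b < a := by omega
    exact cs_fresh G hn e2 v0 a (Finset.mem_image.mpr ⟨b, Finset.mem_range.mpr h', hab.symm⟩)

lemma cs_chain {j k : ℕ} (hjk : j < k) (hs : eps hn j ≠ eps hn k) :
    R (cs s R G hn e2 v0 j) (cs s R G hn e2 v0 k) := by
  refine (cs_spec G hn e2 v0 k).2.2.1 _ (Finset.mem_image.mpr ⟨j, Finset.mem_range.mpr hjk, rfl⟩) ?_
  rw [cs_class G hn e2 v0 j]; exact hs

lemma cs_R_lt {t k : ℕ} (h : R (cs s R G hn e2 v0 t) (cs s R G hn e2 v0 k)) : t < k := by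
  have hcl := G.cls _ _ h
  rw [cs_class G hn e2 v0 t, cs_class G hn e2 v0 k] at hcl
  rcases Nat.lt_trichotomy t k with h' | h' | h'
  · exact h'
  · exact absurd rfl (h' ▸ hcl)
  · exact absurd (cs_chain G hn e2 v0 h' hcl.symm) (fun hh => G.asymm h hh)

lemma eps_two_mul (m : ℕ) : eps hn (2*m) = ⟨0, by omega⟩ := by
  unfold eps; rw [if_pos (even_two_mul m)]

lemma eps_two_mul_add_one (m : ℕ) : eps hn (2*m+1) = ⟨1, by omega⟩ := by
  unfold eps
  rw [if_neg (by simpa [Nat.even_add_one] using even_two_mul m)]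

lemma cs_dist (he2 : Function.Surjective e2) (u v : V) (huv : u ≠ v)
    (hu : ∀ k, u ≠ cs s R G hn e2 v0 k) (hv : ∀ k, v ≠ cs s R G hn e2 v0 k) :
    ∃ k, R (cs s R G hn e2 v0 k) u ∧ ¬ R (cs s R G hn e2 v0 k) v := by
  obtain ⟨m, hm⟩ := he2 (u, v)
  have hcases : ∃ k, e2 (k/2) = (u, v) ∧ s u ≠ eps hn k := by
    by_cases hsu : s u = ⟨0, by omega⟩
    · refine ⟨2*m+1, by rw [show (2*m+1)/2 = m by omega, hm], ?_⟩
      rw [eps_two_mul_add_one hn, hsu]; simp [Fin.ext_iff]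
    · exact ⟨2*m, by rw [show (2*m)/2 = m by omega, hm], by rw [eps_two_mul hn]; exact hsu⟩
  obtain ⟨k, hk, hsu⟩ := hcases
  have hspec := (cs_spec G hn e2 v0 k).2.2.2
  rw [hk] at hspec
  have hup : u ∉ (Finset.range k).image (cs s R G hn e2 v0) := by
    intro h; obtain ⟨j, -, hj⟩ := Finset.mem_image.mp h; exact hu j hj.symm
  have hvp : v ∉ (Finset.range k).image (cs s R G hn e2 v0) := by
    intro h; obtain ⟨j, -, hj⟩ := Finset.mem_image.mp h; exact hv j hj.symm
  obtain ⟨h1, h2⟩ := hspec huv hup hvp hsu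
  refine ⟨k, h1, ?_⟩
  by_cases hsv : s v = eps hn k
  · intro hR
    exact G.cls _ _ hR (by rw [cs_class G hn e2 v0 k, hsv])
  · exact fun hR => G.asymm hR (h2 hsv)

end Derived

lemma partA (G : Gen s R) (hn : 2 ≤ n) [Countable V] [Infinite V] :
    ∃ c : V → Bool, ∀ g : V ≃ V, (∀ x y, R x y ↔ R (g x) (g y)) →
      (∀ v, c (g v) = c v) → ∀ v, g v = v := by
  obtain ⟨e2, he2⟩ := exists_surjective_nat (V × V)
  have v0 : V := Classical.arbitrary V
  set C : ℕ → V := cs s R G hn e2 v0 with hC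
  refine ⟨fun v => decide (∃ t, v = C t), ?_⟩
  intro g hgR hgc
  have hmem : ∀ v, (∃ t, g v = C t) ↔ (∃ t, v = C t) := fun v => by
    have := hgc v
    simp only at this
    exact decide_eq_decide.mp this
  have hfix : ∀ k, g (C k) = C k := by
    intro k
    induction k using Nat.strong_induction_on with
    | _ k ih =>
    obtain ⟨m', hm'⟩ : ∃ t, g.symm (C k) = C t := by
      refine (hmem (g.symm (C k))).mp ⟨k, ?_⟩
      rw [g.apply_symm_apply]
    have hle : m' ≤ k := by
      by_contra hgt
      have hklt : k < m' := by omega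
      have hj : m' - 1 + 1 = m' := by omega
      have hchain : R (C (m'-1)) (C m') := by
        refine cs_chain G hn e2 v0 (by omega) ?_
        rw [← hj]; exact eps_succ_ne hn (m'-1)
      rw [← hm'] at hchain
      have hR2 : R (g (C (m'-1))) (C k) := by
        have := (hgR (C (m'-1)) (g.symm (C k))).mp hchain
        rwa [g.apply_symm_apply] at this
      obtain ⟨t, ht⟩ : ∃ t, g (C (m'-1)) = C t := (hmem (C (m'-1))).mpr ⟨m'-1, rfl⟩
      rw [ht] at hR2
      have htk : t < k := cs_R_lt G hn e2 v0 hR2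
      have h1 : C (m'-1) = C t := g.injective (by rw [ht, ih t htk])
      have h2 : m' - 1 = t := cs_inj G hn e2 v0 h1
      omega
    rcases Nat.lt_or_ge m' k with hlt | hge
    · exfalso
      have h1 : g (C m') = C m' := ih m' hlt
      have h2 : g (C m') = C k := by rw [← hm', g.apply_symm_apply]
      have := cs_inj G hn e2 v0 (h1.symm.trans h2)
      omega
    · have hmk : m' = k := by omega
      subst hmk
      have := congrArg g hm'
      rw [g.apply_symm_apply] at this
      exact this.symm
  intro v
  by_cases hv : ∃ t, v = C t
  · obtain ⟨t, rfl⟩ := hv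
    exact hfix t
  · by_contra hne
    have hgv : ¬ ∃ t, g v = C t := fun h => hv ((hmem v).mp h)
    obtain ⟨k, h1, h2⟩ := cs_dist G hn e2 v0 he2 v (g v)
      (fun h => hne h.symm)
      (fun k hk => hv ⟨k, hk⟩)
      (fun k hk => hgv ⟨k, hk⟩)
    have := (hgR (C k) v).mp h1
    rw [hfix k] at this
    exact h2 this


section PartB

variable (s R) in
def Inv (l : List (V × V)) : Prop :=
  ∀ p ∈ l, ∀ q ∈ l,
    (R p.1 q.1 ↔ R p.2 q.2) ∧ (s p.1 = s q.1 ↔ s p.2 = s q.2) ∧ (p.1 = q.1 ↔ p.2 = q.2)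

lemma targetClass (G : Gen s R) (l : List (V × V)) (hl : Inv s R l) (w : V) :
    ∃ iz : Fin n, (∀ p ∈ l, s p.1 = s w → s p.2 = iz) ∧
      (∀ p ∈ l, s p.1 ≠ s w → s p.2 ≠ iz) := by
  by_cases hcl : ∃ p, p ∈ l ∧ s p.1 = s w
  · obtain ⟨p₀, hp₀, hsp₀⟩ := hcl
    refine ⟨s p₀.2, fun p hp hs => ?_, fun p hp hs hcon => ?_⟩
    · exact ((hl p hp p₀ hp₀).2.1).mp (by rw [hs, hsp₀])
    · exact hs (((hl p hp p₀ hp₀).2.1).mpr hcon |>.trans hsp₀)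
  · have hfree : ∃ iz : Fin n, ∀ p ∈ l, s p.2 ≠ iz := by
      by_contra h
      push_neg at h
      have hψ : ∀ iz : Fin n, ∃ p, p ∈ l ∧ s p.2 = iz := by
        intro iz
        obtain ⟨p, hp1, hp2⟩ := h iz
        exact ⟨p, hp1, hp2⟩
      set ψ : Fin n → Fin n := fun iz => s (Classical.choose (hψ iz)).1 with hψdef
      have hinj : Function.Injective ψ := by
        intro a b hab
        have ha := Classical.choose_spec (hψ a)
        have hb := Classical.choose_spec (hψ b)
        have := ((hl _ ha.1 _ hb.1).2.1).mp hab
        rw [ha.2, hb.2] at this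
        exact this
      have hsurj : Function.Surjective ψ := Finite.injective_iff_surjective.mp hinj
      obtain ⟨iz, hiz⟩ := hsurj (s w)
      exact hcl ⟨Classical.choose (hψ iz), (Classical.choose_spec (hψ iz)).1, hiz⟩
    obtain ⟨iz, hiz⟩ := hfree
    exact ⟨iz, fun p hp hs => absurd ⟨p, hp, hs⟩ hcl, fun p hp _ => hiz p hp⟩

lemma ext1 (G : Gen s R) (hn : 2 ≤ n) (l : List (V × V)) (hl : Inv s R l)
    (w : V) (hw : w ∉ l.map Prod.fst) : ∃ z, Inv s R ((w, z) :: l) := by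
  obtain ⟨iz, hiz1, hiz2⟩ := targetClass G l hl w
  set A : Finset V := (l.toFinset.filter (fun p => R w p.1)).image Prod.snd with hA
  set B : Finset V := (l.toFinset.filter (fun p => R p.1 w)).image Prod.snd with hB
  set F : Finset V := l.toFinset.image Prod.snd with hF
  have hmemA : ∀ a, a ∈ A ↔ ∃ p, p ∈ l ∧ R w p.1 ∧ p.2 = a := by
    intro a
    simp [hA, Finset.mem_image, Finset.mem_filter, List.mem_toFinset, and_assoc]
  have hmemB : ∀ a, a ∈ B ↔ ∃ p, p ∈ l ∧ R p.1 w ∧ p.2 = a := by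
    intro a
    simp [hB, Finset.mem_image, Finset.mem_filter, List.mem_toFinset, and_assoc]
  have hAavoid : ∀ a ∈ A, s a ≠ iz := by
    intro a ha
    obtain ⟨p, hp, hR, rfl⟩ := (hmemA a).mp ha
    exact hiz2 p hp (fun hh => G.cls w p.1 hR hh.symm)
  have hBavoid : ∀ a ∈ B, s a ≠ iz := by
    intro a ha
    obtain ⟨p, hp, hR, rfl⟩ := (hmemB a).mp ha
    exact hiz2 p hp (G.cls p.1 w hR)
  have hdisj : Disjoint A B := by
    rw [Finset.disjoint_left]
    intro a haA haB
    obtain ⟨p, hp, hRp, hp2⟩ := (hmemA a).mp haA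
    obtain ⟨q, hq, hRq, hq2⟩ := (hmemB a).mp haB
    have h1 : p.1 = q.1 := ((hl p hp q hq).2.2).mpr (hp2.trans hq2.symm)
    exact G.asymm hRp (h1 ▸ hRq)
  obtain ⟨z, hz1, hz2, hz3, hz4⟩ := L2 G hn iz _ A B F rfl hdisj hAavoid hBavoid
  have key : ∀ q ∈ l, (R w q.1 ↔ R z q.2) ∧ (R q.1 w ↔ R q.2 z) ∧
      (s w = s q.1 ↔ s z = s q.2) ∧ w ≠ q.1 ∧ z ≠ q.2 := by
    intro q hq
    have hwq : w ≠ q.1 := by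
      intro h
      exact hw (h ▸ List.mem_map_of_mem (f := Prod.fst) hq)
    have hzq : z ≠ q.2 := by
      intro h
      exact hz4 (by rw [hF]; exact h ▸ Finset.mem_image_of_mem Prod.snd (List.mem_toFinset.mpr hq))
    by_cases h1 : s w = s q.1
    · have hsz : s z = s q.2 := by rw [hz1]; exact (hiz1 q hq h1.symm).symm
      exact ⟨iff_of_false (fun h => G.cls _ _ h h1) (fun h => G.cls _ _ h hsz),
        iff_of_false (fun h => G.cls _ _ h h1.symm) (fun h => G.cls _ _ h hsz.symm),
        iff_of_true h1 hsz, hwq, hzq⟩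
    · have hsz' : s z ≠ s q.2 := by
        intro h
        exact hiz2 q hq (fun hh => h1 hh.symm) (h.symm.trans hz1)
      rcases G.total h1 with h2 | h2
      · have hzq2 : R z q.2 := hz2 q.2 ((hmemA q.2).mpr ⟨q, hq, h2, rfl⟩)
        exact ⟨iff_of_true h2 hzq2,
          iff_of_false (fun h => G.asymm h2 h) (fun h => G.asymm hzq2 h),
          iff_of_false h1 hsz', hwq, hzq⟩
      · have hzq2 : R q.2 z := hz3 q.2 ((hmemB q.2).mpr ⟨q, hq, h2, rfl⟩)
        exact ⟨iff_of_false (fun h => G.asymm h2 h) (fun h => G.asymm hzq2 h),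
          iff_of_true h2 hzq2, iff_of_false h1 hsz', hwq, hzq⟩
  refine ⟨z, ?_⟩
  intro p hp q hq
  rcases List.mem_cons.mp hp with rfl | hp' <;> rcases List.mem_cons.mp hq with hq1 | hq'
  · rw [hq1]
    exact ⟨iff_of_false (G.irrefl w) (G.irrefl z), iff_of_true rfl rfl, iff_of_true rfl rfl⟩
  · obtain ⟨k1, k2, k3, k4, k5⟩ := key q hq'
    exact ⟨k1, k3, iff_of_false k4 k5⟩
  · rw [hq1]
    obtain ⟨k1, k2, k3, k4, k5⟩ := key p hp'
    exact ⟨k2, ⟨fun h => (k3.mp h.symm).symm, fun h => (k3.mpr h.symm).symm⟩,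
      iff_of_false (fun h => k4 h.symm) (fun h => k5 h.symm)⟩
  · exact hl p hp' q hq'

lemma inv_swap (l : List (V × V)) (h : Inv s R l) : Inv s R (l.map Prod.swap) := by
  intro p hp q hq
  obtain ⟨p', hp', rfl⟩ := List.mem_map.mp hp
  obtain ⟨q', hq', rfl⟩ := List.mem_map.mp hq
  obtain ⟨k1, k2, k3⟩ := h p' hp' q' hq'
  exact ⟨k1.symm, k2.symm, k3.symm⟩

lemma ext2 (G : Gen s R) (hn : 2 ≤ n) (l : List (V × V)) (hl : Inv s R l)
    (z : V) (hz : z ∉ l.map Prod.snd) : ∃ w, Inv s R ((w, z) :: l) := by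
  have hz' : z ∉ (l.map Prod.swap).map Prod.fst := by
    simpa [List.map_map, Function.comp] using hz
  obtain ⟨w, hw⟩ := ext1 G hn (l.map Prod.swap) (inv_swap l hl) z hz'
  refine ⟨w, ?_⟩
  have h2 := inv_swap _ hw
  have h3 : ((z, w) :: l.map Prod.swap).map Prod.swap = (w, z) :: l := by
    simp [List.map_map, Function.comp, Prod.swap_swap]
  rwa [h3] at h2

lemma inv_single (G : Gen s R) (x0 y0 : V) : Inv s R [(x0, y0)] := by
  intro p hp q hq
  rw [List.mem_singleton] at hp hq
  subst hp; subst hq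
  exact ⟨iff_of_false (G.irrefl x0) (G.irrefl y0), iff_of_true rfl rfl, iff_of_true rfl rfl⟩

lemma forthEx (G : Gen s R) (hn : 2 ≤ n) (e : ℕ → V) (L : List (V × V)) (hL : Inv s R L)
    (t : ℕ) : ∃ l' : List (V × V), Inv s R l' ∧ (∃ pr, l' = pr :: L) ∧
      e t ∈ l'.map Prod.fst := by
  by_cases h : e t ∈ L.map Prod.fst
  · obtain ⟨p, hp, hp1⟩ := List.mem_map.mp h
    refine ⟨p :: L, ?_, ⟨p, rfl⟩, ?_⟩
    · intro a ha b hb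
      have ha' : a ∈ L := by rcases List.mem_cons.mp ha with rfl | h' <;> [exact hp; exact h']
      have hb' : b ∈ L := by rcases List.mem_cons.mp hb with rfl | h' <;> [exact hp; exact h']
      exact hL a ha' b hb'
    · rw [List.map_cons]
      exact hp1 ▸ List.mem_cons_self
  · obtain ⟨z, hz⟩ := ext1 G hn L hL (e t) h
    exact ⟨(e t, z) :: L, hz, ⟨_, rfl⟩, by rw [List.map_cons]; exact List.mem_cons_self⟩

lemma backEx (G : Gen s R) (hn : 2 ≤ n) (e : ℕ → V) (L : List (V × V)) (hL : Inv s R L)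
    (t : ℕ) : ∃ l' : List (V × V), Inv s R l' ∧ (∃ pr, l' = pr :: L) ∧
      e t ∈ l'.map Prod.snd := by
  by_cases h : e t ∈ L.map Prod.snd
  · obtain ⟨p, hp, hp1⟩ := List.mem_map.mp h
    refine ⟨p :: L, ?_, ⟨p, rfl⟩, ?_⟩
    · intro a ha b hb
      have ha' : a ∈ L := by rcases List.mem_cons.mp ha with rfl | h' <;> [exact hp; exact h']
      have hb' : b ∈ L := by rcases List.mem_cons.mp hb with rfl | h' <;> [exact hp; exact h']
      exact hL a ha' b hb'
    · rw [List.map_cons]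
      exact hp1 ▸ List.mem_cons_self
  · obtain ⟨w, hw⟩ := ext2 G hn L hL (e t) h
    exact ⟨(w, e t) :: L, hw, ⟨_, rfl⟩, by rw [List.map_cons]; exact List.mem_cons_self⟩

variable (s R) in
noncomputable def bf (G : Gen s R) (hn : 2 ≤ n) (e : ℕ → V) (x0 y0 : V) :
    ℕ → {l : List (V × V) // Inv s R l}
  | 0 => ⟨[(x0, y0)], inv_single G x0 y0⟩
  | k + 1 =>
    if Even k then
      ⟨Classical.choose (forthEx G hn e (bf G hn e x0 y0 k).1 (bf G hn e x0 y0 k).2 (k/2)),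
        (Classical.choose_spec (forthEx G hn e (bf G hn e x0 y0 k).1 (bf G hn e x0 y0 k).2 (k/2))).1⟩
    else
      ⟨Classical.choose (backEx G hn e (bf G hn e x0 y0 k).1 (bf G hn e x0 y0 k).2 (k/2)),
        (Classical.choose_spec (backEx G hn e (bf G hn e x0 y0 k).1 (bf G hn e x0 y0 k).2 (k/2))).1⟩

variable (G : Gen s R) (hn : 2 ≤ n) (e : ℕ → V) (x0 y0 : V)

lemma bf_succ (k : ℕ) : ∃ pr, (bf s R G hn e x0 y0 (k+1)).1 = pr :: (bf s R G hn e x0 y0 k).1 := by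
  by_cases hk : Even k
  · have hs := (Classical.choose_spec (forthEx G hn e (bf s R G hn e x0 y0 k).1
      (bf s R G hn e x0 y0 k).2 (k/2))).2.1
    simp only [bf, if_pos hk]
    exact hs
  · have hs := (Classical.choose_spec (backEx G hn e (bf s R G hn e x0 y0 k).1
      (bf s R G hn e x0 y0 k).2 (k/2))).2.1
    simp only [bf, if_neg hk]
    exact hs

lemma bf_mono {k m : ℕ} (hkm : k ≤ m) :
    ∀ p ∈ (bf s R G hn e x0 y0 k).1, p ∈ (bf s R G hn e x0 y0 m).1 := by
  induction m, hkm using Nat.le_induction with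
  | base => exact fun p hp => hp
  | succ m hm ih =>
    intro p hp
    obtain ⟨pr, hpr⟩ := bf_succ G hn e x0 y0 m
    rw [hpr]
    exact List.mem_cons_of_mem pr (ih p hp)

lemma bf_fst_mem (k : ℕ) (hk : Even k) :
    e (k/2) ∈ ((bf s R G hn e x0 y0 (k+1)).1).map Prod.fst := by
  simp only [bf, if_pos hk]
  exact (Classical.choose_spec (forthEx G hn e (bf s R G hn e x0 y0 k).1
    (bf s R G hn e x0 y0 k).2 (k/2))).2.2

lemma bf_snd_mem (k : ℕ) (hk : ¬ Even k) :
    e (k/2) ∈ ((bf s R G hn e x0 y0 (k+1)).1).map Prod.snd := by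
  simp only [bf, if_neg hk]
  exact (Classical.choose_spec (backEx G hn e (bf s R G hn e x0 y0 k).1
    (bf s R G hn e x0 y0 k).2 (k/2))).2.2

end PartB


lemma partB (G : Gen s R) (hn : 2 ≤ n) [Countable V] [Infinite V] :
    ∃ g : V ≃ V, (∀ x y, R x y ↔ R (g x) (g y)) ∧ ∃ v, g v ≠ v := by
  obtain ⟨e, he⟩ := exists_surjective_nat V
  obtain ⟨x0, y0, hxy⟩ := exists_pair_ne V
  set P : V × V → Prop := fun p => ∃ k, p ∈ (bf s R G hn e x0 y0 k).1 with hP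
  have hglob : ∀ p q, P p → P q →
      ((R p.1 q.1 ↔ R p.2 q.2) ∧ (s p.1 = s q.1 ↔ s p.2 = s q.2) ∧ (p.1 = q.1 ↔ p.2 = q.2)) := by
    rintro p q ⟨k, hk⟩ ⟨m, hm⟩
    exact (bf s R G hn e x0 y0 (max k m)).2 p
      (bf_mono G hn e x0 y0 (le_max_left k m) p hk) q
      (bf_mono G hn e x0 y0 (le_max_right k m) q hm)
  have hcov1 : ∀ v : V, ∃ p, P p ∧ p.1 = v := by
    intro v
    obtain ⟨t, ht⟩ := he v
    have hmem := bf_fst_mem G hn e x0 y0 (2*t) (even_two_mul t)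
    rw [show 2*t/2 = t by omega] at hmem
    obtain ⟨p, hp, hp1⟩ := List.mem_map.mp hmem
    exact ⟨p, ⟨2*t+1, hp⟩, ht ▸ hp1⟩
  have hcov2 : ∀ v : V, ∃ p, P p ∧ p.2 = v := by
    intro v
    obtain ⟨t, ht⟩ := he v
    have hmem := bf_snd_mem G hn e x0 y0 (2*t+1)
      (by simp [Nat.even_add_one, even_two_mul t])
    rw [show (2*t+1)/2 = t by omega] at hmem
    obtain ⟨p, hp, hp1⟩ := List.mem_map.mp hmem
    exact ⟨p, ⟨2*t+2, hp⟩, ht ▸ hp1⟩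
  choose pf hpf hpf1 using hcov1
  have hinj : Function.Injective (fun v => (pf v).2) := by
    intro u v huv
    have := ((hglob (pf u) (pf v) (hpf u) (hpf v)).2.2).mpr huv
    rwa [hpf1 u, hpf1 v] at this
  have hsurj : Function.Surjective (fun v => (pf v).2) := by
    intro v
    obtain ⟨q, hq, hq2⟩ := hcov2 v
    refine ⟨q.1, ?_⟩
    have := ((hglob (pf q.1) q (hpf q.1) hq).2.2).mp (by rw [hpf1])
    simp only
    rw [this, hq2]
  let g : V ≃ V := Equiv.ofBijective (fun v => (pf v).2) ⟨hinj, hsurj⟩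
  have hgapp : ∀ v, g v = (pf v).2 := fun v => rfl
  refine ⟨g, ?_, x0, ?_⟩
  · intro x y
    have := (hglob (pf x) (pf y) (hpf x) (hpf y)).1
    rw [hpf1 x, hpf1 y] at this
    rw [hgapp x, hgapp y]
    exact this
  · have hq0 : P (x0, y0) := ⟨0, by simp [bf]⟩
    have := ((hglob (pf x0) (x0, y0) (hpf x0) hq0).2.2).mp (by rw [hpf1])
    rw [hgapp x0, this]
    exact hxy.symm

end NSI

/-- For finite `n ≥ 2`, the generic directed graph `n ∗ I_∞` in which
non-adjacency is an equivalence relation with `n` classes has distinguishing number 2. -/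
theorem n_star_I_infinity_distinguishing_number_two
    (n : ℕ) (hn : 2 ≤ n) (V : Type*) [Countable V] [Infinite V]
    (s : V → Fin n) (hs : Function.Surjective s) (R : V → V → Prop)
    (hclass : ∀ x y, R x y → s x ≠ s y)
    (htour : ∀ x y, s x ≠ s y → (R x y ↔ ¬ R y x))
    (hext : ∀ i : Fin n, ∀ A B : Finset V, Disjoint A B →
      (∀ a ∈ A, s a ≠ i) → (∀ b ∈ B, s b ≠ i) →
      ∃ x, s x = i ∧ (∀ a ∈ A, R x a) ∧ (∀ b ∈ B, R b x)) :
    (∃ c : V → Bool, ∀ g : V ≃ V, (∀ x y, R x y ↔ R (g x) (g y)) →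
        (∀ v, c (g v) = c v) → ∀ v, g v = v) ∧
    (∃ g : V ≃ V, (∀ x y, R x y ↔ R (g x) (g y)) ∧ ∃ v, g v ≠ v) := by
  have G : NSI.Gen s R := ⟨hclass, htour, hext⟩
  exact ⟨NSI.partA G hn, NSI.partB G hn⟩
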